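/- Let r1, r2 be non-negative integers with r := r1 + r2 ≥ 1, and let G = Z_{2^{α1}} ⊕ ... ⊕ Z_{2^{α_{r1}}} ⊕ Z_2^{r2} with α1 ≥ ... ≥ α_{r1} ≥ 2. Then the number of index-2 subgroups of G having rank r is 2^{r1} − 1, and the number of index-2 subgroups of G having rank r − 1 is 2^r − 2^{r1}. -/

import Mathlib

/-- A finite abelian 2-group has rank `ρ` iff it has exactly `2^ρ - 1` elements of
order 2 (an element `x` has order 2 iff `x ≠ 0` and `x + x = 0`). -/
def HasRank2Group (H : Type*) [AddGroup H] (ρ : ℕ) : Prop :=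
  Nat.card {x : H // x ≠ 0 ∧ x + x = 0} = 2 ^ ρ - 1


lemma zmod2_cases (c : ZMod 2) : c = 0 ∨ c = 1 := by revert c; decide

lemma zmod2_add_self (z : ZMod 2) : z + z = 0 := by
  rcases zmod2_cases z with h | h <;> rw [h] <;> rfl

lemma even_smul_zmod2 (n : ℕ) (hn : 2 ∣ n) (z : ZMod 2) : n • z = 0 := by
  rw [nsmul_eq_mul, show ((n : ZMod 2) : ZMod 2) = 0 from
    (ZMod.natCast_eq_zero_iff n 2).2 hn, zero_mul]

lemma torsion_val_dvd {a : ℕ} (ha : 1 ≤ a) (x : ZMod (2 ^ a)) (hx : x + x = 0) :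
    2 ^ (a - 1) ∣ x.val := by
  have h2 : ((2 * x.val : ℕ) : ZMod (2 ^ a)) = 0 := by
    push_cast
    rw [ZMod.natCast_zmod_val, two_mul, hx]
  rw [ZMod.natCast_eq_zero_iff] at h2
  obtain ⟨k, hk⟩ := h2
  obtain ⟨b, rfl⟩ := Nat.exists_eq_add_of_le ha
  have hp : 2 ^ (1 + b) = 2 * 2 ^ b := by rw [pow_add]; ring
  have hm : 2 * x.val = 2 * (2 ^ b * k) := by rw [hk, hp]; ring
  have hv : x.val = 2 ^ b * k := by omega
  have hb : 1 + b - 1 = b := by omega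
  rw [hb, hv]
  exact ⟨k, rfl⟩

section Main
variable {r1 r2 : ℕ} {α : Fin r1 → ℕ}

lemma phi_decomp (φ : (∀ i : Fin r1, ZMod (2 ^ α i)) × (Fin r2 → ZMod 2) →+ ZMod 2)
    (x : ∀ i : Fin r1, ZMod (2 ^ α i)) (y : Fin r2 → ZMod 2) :
    φ (x, y) = ∑ i, (x i).val • φ (Pi.single i 1, 0)
      + ∑ j, (y j).val • φ (0, Pi.single j 1) := by
  have hxy : ((x, y) : (∀ i : Fin r1, ZMod (2 ^ α i)) × (Fin r2 → ZMod 2))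
      = (x, 0) + (0, y) := by simp
  rw [hxy, map_add]
  congr 1
  · have hx : x = ∑ i, Pi.single i (x i) := (Finset.univ_sum_single x).symm
    have h1 : ((x, 0) : (∀ i : Fin r1, ZMod (2 ^ α i)) × (Fin r2 → ZMod 2))
        = ∑ i, (Pi.single i (x i), 0) := by
      rw [Prod.ext_iff]
      constructor
      · simpa [Prod.fst_sum] using hx
      · simp [Prod.fst_sum, Prod.snd_sum]
    rw [h1, map_sum]
    refine Finset.sum_congr rfl fun i _ => ?_
    have hv : x i = ((x i).val : ZMod (2 ^ α i)) := (ZMod.natCast_zmod_val _).symm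
    have hsm : Pi.single i (x i) = (x i).val • Pi.single (M := fun i => ZMod (2 ^ α i)) i 1 := by
      rw [← Pi.single_smul, nsmul_eq_mul, mul_one, ZMod.natCast_zmod_val]
    rw [hsm]
    have : ((x i).val • Pi.single (M := fun i => ZMod (2 ^ α i)) i 1, (0 : Fin r2 → ZMod 2))
        = (x i).val • (Pi.single (M := fun i => ZMod (2 ^ α i)) i 1, (0 : Fin r2 → ZMod 2)) := by
      simp [Prod.smul_def]
    rw [this, map_nsmul]
  · have hy : y = ∑ j, Pi.single j (y j) := (Finset.univ_sum_single y).symm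
    have h1 : ((0, y) : (∀ i : Fin r1, ZMod (2 ^ α i)) × (Fin r2 → ZMod 2))
        = ∑ j, (0, Pi.single j (y j)) := by
      rw [Prod.ext_iff]
      constructor
      · simp [Prod.fst_sum, Prod.snd_sum]
      · simpa [Prod.snd_sum] using hy
    rw [h1, map_sum]
    refine Finset.sum_congr rfl fun j _ => ?_
    have hv : y j = ((y j).val : ZMod 2) := (ZMod.natCast_zmod_val _).symm
    have hsm : Pi.single j (y j) = (y j).val • Pi.single (M := fun _ : Fin r2 => ZMod 2) j 1 := by
      rw [← Pi.single_smul, nsmul_eq_mul, mul_one, ZMod.natCast_zmod_val]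
    rw [hsm]
    have : ((0 : ∀ i : Fin r1, ZMod (2 ^ α i)), (y j).val • Pi.single (M := fun _ : Fin r2 => ZMod 2) j 1)
        = (y j).val • ((0 : ∀ i : Fin r1, ZMod (2 ^ α i)), Pi.single (M := fun _ : Fin r2 => ZMod 2) j 1) := by
      simp [Prod.smul_def]
    rw [this, map_nsmul]

end Main

-- helpers on cards
lemma card_ne {S : Type*} [Finite S] (z : S) :
    Nat.card {x : S // x ≠ z} = Nat.card S - 1 := by
  classical
  haveI := Fintype.ofFinite S
  rw [Nat.card_eq_fintype_card, Nat.card_eq_fintype_card]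
  have : Fintype.card {x : S // x ≠ z} = Fintype.card {x : S // ¬ x = z} := rfl
  rw [this, Fintype.card_subtype_compl, Fintype.card_subtype_eq]

lemma card_and_ne {S : Type*} [Finite S] {p : S → Prop} (z : S) (hz : p z) :
    Nat.card {x : S // p x ∧ x ≠ z} = Nat.card {x : S // p x} - 1 := by
  classical
  have e : {x : S // p x ∧ x ≠ z} ≃ {y : {x : S // p x} // y ≠ ⟨z, hz⟩} :=
    { toFun := fun w => ⟨⟨w.1, w.2.1⟩, fun h => w.2.2 (congrArg Subtype.val h)⟩
      invFun := fun y => ⟨y.1.1, y.1.2, fun h => y.2 (Subtype.ext h)⟩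
      left_inv := fun w => rfl
      right_inv := fun y => rfl }
  rw [Nat.card_congr e, card_ne]

lemma card_zmod_torsion (a : ℕ) (ha : 1 ≤ a) :
    Nat.card {z : ZMod (2 ^ a) // z + z = 0} = 2 := by
  set t : ZMod (2 ^ a) := ((2 ^ (a - 1) : ℕ) : ZMod (2 ^ a)) with ht
  have htt : t + t = 0 := by
    rw [ht, ← Nat.cast_add, show 2 ^ (a - 1) + 2 ^ (a - 1) = 2 ^ a by
      rw [← two_mul, ← pow_succ']; congr 1; omega, ZMod.natCast_self]
  have ht0 : t ≠ 0 := by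
    intro h
    rw [ht, ZMod.natCast_eq_zero_iff] at h
    have h1 := Nat.le_of_dvd (Nat.pow_pos (by norm_num)) h
    have h2 : 2 ^ (a - 1) < 2 ^ a := Nat.pow_lt_pow_right (by norm_num) (by omega)
    omega
  have hmod : ∀ k : ℕ, k • t = (k % 2) • t := by
    intro k
    conv_lhs => rw [show k = 2 * (k / 2) + k % 2 from (Nat.div_add_mod k 2).symm]
    rw [add_smul, mul_comm, mul_smul, two_nsmul, htt, smul_zero, zero_add]
  have hpf : ∀ c : ZMod 2, c.val • t + c.val • t = 0 := fun c => by
    rw [← smul_add, htt, smul_zero]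
  have hinj : Function.Injective
      (fun c : ZMod 2 => (⟨c.val • t, hpf c⟩ : {z : ZMod (2 ^ a) // z + z = 0})) := by
    intro c d h
    have h' : c.val • t = d.val • t := congrArg Subtype.val h
    rcases zmod2_cases c with hc | hc <;> rcases zmod2_cases d with hd | hd <;>
        subst hc <;> subst hd <;> first
      | rfl
      | (exfalso; rw [ZMod.val_zero, ZMod.val_one, zero_smul, one_smul] at h'
         exact ht0 h'.symm)
      | (exfalso; rw [ZMod.val_zero, ZMod.val_one, zero_smul, one_smul] at h'
         exact ht0 h')
  have hsurj : Function.Surjective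
      (fun c : ZMod 2 => (⟨c.val • t, hpf c⟩ : {z : ZMod (2 ^ a) // z + z = 0})) := by
    rintro ⟨z, hz⟩
    have hdvd : 2 ^ (a - 1) ∣ z.val := by
      have h2 : ((2 * z.val : ℕ) : ZMod (2 ^ a)) = 0 := by
        push_cast
        rw [ZMod.natCast_zmod_val, two_mul, hz]
      rw [ZMod.natCast_eq_zero_iff] at h2
      obtain ⟨k, hk⟩ := h2
      obtain ⟨b, hab⟩ := Nat.exists_eq_add_of_le ha
      have hp : 2 ^ a = 2 * 2 ^ b := by rw [hab, pow_add]; ring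
      have hm : 2 * z.val = 2 * (2 ^ b * k) := by rw [hk, hp]; ring
      have hv : z.val = 2 ^ b * k := by omega
      have hb : a - 1 = b := by omega
      rw [hb, hv]
      exact ⟨k, rfl⟩
    obtain ⟨k, hk⟩ := hdvd
    refine ⟨(k : ZMod 2), Subtype.ext ?_⟩
    show ((k : ZMod 2)).val • t = z
    rw [ZMod.val_natCast, ← hmod, ← Nat.cast_smul_eq_nsmul (ZMod (2 ^ a)), smul_eq_mul, ht]
    rw [← Nat.cast_mul, mul_comm, ← hk, ZMod.natCast_zmod_val]
  exact (Nat.card_congr (Equiv.ofBijective _ ⟨hinj, hsurj⟩)).symm.trans (Nat.card_zmod 2)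

section Main2
variable {r1 r2 : ℕ} {α : Fin r1 → ℕ}

lemma card_torsion (hα : ∀ i, 1 ≤ α i) :
    Nat.card {x : (∀ i : Fin r1, ZMod (2 ^ α i)) × (Fin r2 → ZMod 2) // x + x = 0}
      = 2 ^ (r1 + r2) := by
  classical
  have e1 : {x : (∀ i : Fin r1, ZMod (2 ^ α i)) × (Fin r2 → ZMod 2) // x + x = 0}
      ≃ {u : ∀ i : Fin r1, ZMod (2 ^ α i) // u + u = 0} × {v : Fin r2 → ZMod 2 // v + v = 0} :=
    { toFun := fun z => (⟨z.1.1, congrArg Prod.fst z.2⟩, ⟨z.1.2, congrArg Prod.snd z.2⟩)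
      invFun := fun w => ⟨(w.1.1, w.2.1), Prod.ext w.1.2 w.2.2⟩
      left_inv := fun z => rfl
      right_inv := fun w => rfl }
  have e2 : {u : ∀ i : Fin r1, ZMod (2 ^ α i) // u + u = 0}
      ≃ ∀ i : Fin r1, {z : ZMod (2 ^ α i) // z + z = 0} :=
    (Equiv.subtypeEquivRight (fun u => by
      simp [funext_iff])).trans (Equiv.subtypePiEquivPi)
  have e3 : {v : Fin r2 → ZMod 2 // v + v = 0} ≃ (Fin r2 → ZMod 2) :=
    Equiv.subtypeUnivEquiv (fun v => funext fun j => zmod2_add_self (v j))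
  rw [Nat.card_congr (e1.trans (Equiv.prodCongr e2 e3)), Nat.card_prod, Nat.card_pi]
  have : ∀ i : Fin r1, Nat.card {z : ZMod (2 ^ α i) // z + z = 0} = 2 :=
    fun i => card_zmod_torsion _ (hα i)
  rw [Finset.prod_congr rfl (fun i _ => this i), Finset.prod_const, Nat.card_fun]
  simp [Nat.card_zmod, pow_add, Finset.card_univ]

def TG : AddSubgroup ((∀ i : Fin r1, ZMod (2 ^ α i)) × (Fin r2 → ZMod 2)) where
  carrier := {x | x + x = 0}
  zero_mem' := by simp
  add_mem' := by
    intro a b ha hb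
    show (a + b) + (a + b) = 0
    rw [add_add_add_comm]
    rw [Set.mem_setOf_eq] at ha hb
    rw [ha, hb, add_zero]
  neg_mem' := by
    intro a ha
    show (-a) + (-a) = 0
    rw [Set.mem_setOf_eq] at ha
    rw [← neg_add, ha, neg_zero]

lemma key_count (hα : ∀ i, 1 ≤ α i) (hr : 1 ≤ r1 + r2)
    (φ : (∀ i : Fin r1, ZMod (2 ^ α i)) × (Fin r2 → ZMod 2) →+ ZMod 2) :
    Nat.card {x : (∀ i : Fin r1, ZMod (2 ^ α i)) × (Fin r2 → ZMod 2) // φ x = 0 ∧ x + x = 0}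
      = if (∀ x, x + x = 0 → φ x = 0) then 2 ^ (r1 + r2) else 2 ^ (r1 + r2 - 1) := by
  classical
  by_cases h : ∀ x, x + x = 0 → φ x = 0
  · rw [if_pos h, ← card_torsion (r2 := r2) hα]
    exact Nat.card_congr (Equiv.subtypeEquivRight (fun x => ⟨fun h' => h'.2, fun h2 => ⟨h x h2, h2⟩⟩))
  · rw [if_neg h]
    push_neg at h
    obtain ⟨tt, htt, hft⟩ := h
    set ψ : (TG (α := α) (r2 := r2) : AddSubgroup _) →+ ZMod 2 := φ.comp (TG).subtype with hψ
    have hsurj : Function.Surjective ψ := by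
      intro c
      rcases zmod2_cases c with hc | hc
      · exact ⟨0, by rw [hc, map_zero]⟩
      · refine ⟨⟨tt, htt⟩, ?_⟩
        rcases zmod2_cases (φ tt) with h0 | h1
        · exact absurd h0 hft
        · rw [hc]; exact h1
    have hidx : ψ.ker.index = 2 := by
      rw [AddSubgroup.index_ker, AddMonoidHom.range_eq_top_of_surjective ψ hsurj]
      rw [Nat.card_congr AddSubgroup.topEquiv.toEquiv, Nat.card_zmod]
    have hcard : Nat.card ψ.ker * 2 = 2 ^ (r1 + r2) := by
      have h1 := AddSubgroup.card_mul_index (H := ψ.ker)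
      rw [hidx] at h1
      rw [h1, ← card_torsion (r2 := r2) hα]
      exact Nat.card_congr (Equiv.subtypeEquivRight (fun x => Iff.rfl))
    have e : {x : (∀ i : Fin r1, ZMod (2 ^ α i)) × (Fin r2 → ZMod 2) // φ x = 0 ∧ x + x = 0}
        ≃ ψ.ker :=
      { toFun := fun z => ⟨⟨z.1, z.2.2⟩, z.2.1⟩
        invFun := fun w => ⟨w.1.1, w.2, w.1.2⟩
        left_inv := fun z => rfl
        right_inv := fun w => rfl }
    rw [Nat.card_congr e]
    have hp : 2 ^ (r1 + r2) = 2 ^ (r1 + r2 - 1) * 2 := by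
      rw [← pow_succ]; congr 1; omega
    omega


lemma rank_count (hα : ∀ i, 1 ≤ α i) (hr : 1 ≤ r1 + r2)
    (φ : (∀ i : Fin r1, ZMod (2 ^ α i)) × (Fin r2 → ZMod 2) →+ ZMod 2) :
    Nat.card {x : ↥φ.ker // x ≠ 0 ∧ x + x = 0}
      = (if (∀ x, x + x = 0 → φ x = 0) then 2 ^ (r1 + r2) else 2 ^ (r1 + r2 - 1)) - 1 := by
  have e : {x : ↥φ.ker // x ≠ 0 ∧ x + x = 0}
      ≃ {x : (∀ i : Fin r1, ZMod (2 ^ α i)) × (Fin r2 → ZMod 2) //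
          (φ x = 0 ∧ x + x = 0) ∧ x ≠ 0} :=
    { toFun := fun z => ⟨z.1.1, ⟨AddMonoidHom.mem_ker.1 z.1.2,
        congrArg Subtype.val z.2.2⟩, fun h => z.2.1 (Subtype.ext h)⟩
      invFun := fun w => ⟨⟨w.1, AddMonoidHom.mem_ker.2 w.2.1.1⟩,
        fun h => w.2.2 (congrArg Subtype.val h), Subtype.ext w.2.1.2⟩
      left_inv := fun z => rfl
      right_inv := fun w => rfl }
  rw [Nat.card_congr e, card_and_ne 0 ⟨map_zero φ, by rw [add_zero]⟩, key_count hα hr φ]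

lemma hasrank_ker (hα : ∀ i, 1 ≤ α i) (hr : 1 ≤ r1 + r2)
    (φ : (∀ i : Fin r1, ZMod (2 ^ α i)) × (Fin r2 → ZMod 2) →+ ZMod 2) :
    (HasRank2Group ↥φ.ker (r1 + r2) ↔ ∀ x, x + x = 0 → φ x = 0) ∧
    (HasRank2Group ↥φ.ker (r1 + r2 - 1) ↔ ¬ ∀ x, x + x = 0 → φ x = 0) := by
  have hlt : 2 ^ (r1 + r2 - 1) < 2 ^ (r1 + r2) := Nat.pow_lt_pow_right (by norm_num) (by omega)
  have hpos : 1 ≤ 2 ^ (r1 + r2 - 1) := Nat.one_le_two_pow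
  unfold HasRank2Group
  rw [rank_count hα hr φ]
  by_cases h : ∀ x, x + x = 0 → φ x = 0
  · rw [if_pos h]
    constructor
    · exact ⟨fun _ => h, fun _ => rfl⟩
    · constructor
      · intro hEq; exfalso; omega
      · intro hn; exact absurd h hn
  · rw [if_neg h]
    constructor
    · constructor
      · intro hEq; exfalso; omega
      · intro h'; exact absurd h' h
    · exact ⟨fun _ => h, fun _ => rfl⟩

end Main2

section Esec
variable {G : Type*} [AddCommGroup G]

open Classical in
noncomputable def toHom (H : AddSubgroup G) (hH : H.index = 2) : G →+ ZMod 2 where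
  toFun x := if x ∈ H then 0 else 1
  map_zero' := if_pos (zero_mem H)
  map_add' a b := by
    have key := AddSubgroup.add_mem_iff_of_index_two hH (a := a) (b := b)
    show (if a + b ∈ H then (0 : ZMod 2) else 1)
      = (if a ∈ H then (0 : ZMod 2) else 1) + (if b ∈ H then (0 : ZMod 2) else 1)
    by_cases ha : a ∈ H <;> by_cases hb : b ∈ H
    · rw [if_pos ha, if_pos hb, if_pos (key.2 (iff_of_true ha hb)), add_zero]
    · rw [if_pos ha, if_neg hb, if_neg (fun h => hb ((key.1 h).1 ha)), zero_add]
    · rw [if_neg ha, if_pos hb, if_neg (fun h => ha ((key.1 h).2 hb)), add_zero]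
    · rw [if_neg ha, if_neg hb, if_pos (key.2 (iff_of_false ha hb))]
      decide

lemma toHom_apply_of_mem {H : AddSubgroup G} (hH : H.index = 2) {x : G} (hx : x ∈ H) :
    toHom H hH x = 0 := by simp [toHom, hx]

lemma toHom_apply_of_not_mem {H : AddSubgroup G} (hH : H.index = 2) {x : G} (hx : x ∉ H) :
    toHom H hH x = 1 := by simp [toHom, hx]

lemma toHom_ker {H : AddSubgroup G} (hH : H.index = 2) : (toHom H hH).ker = H := by
  ext x
  rw [AddMonoidHom.mem_ker]
  by_cases hx : x ∈ H
  · simp [toHom_apply_of_mem hH hx, hx]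
  · simp [toHom_apply_of_not_mem hH hx, hx]

lemma toHom_ne {H : AddSubgroup G} (hH : H.index = 2) : toHom H hH ≠ 0 := by
  intro h0
  have hne : H ≠ ⊤ := by
    intro h
    rw [h, AddSubgroup.index_top] at hH
    omega
  obtain ⟨x, hx⟩ : ∃ x, x ∉ H := by
    by_contra hc
    push_neg at hc
    exact hne (AddSubgroup.eq_top_iff' H |>.2 hc)
  have := toHom_apply_of_not_mem hH hx
  rw [h0] at this
  simp at this

lemma ker_index {φ : G →+ ZMod 2} (hφ : φ ≠ 0) : φ.ker.index = 2 := by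
  have hsurj : Function.Surjective φ := by
    obtain ⟨x, hx⟩ : ∃ x, φ x ≠ 0 := by
      by_contra hc
      push_neg at hc
      exact hφ (AddMonoidHom.ext hc)
    intro c
    rcases zmod2_cases c with hc | hc
    · exact ⟨0, by rw [hc, map_zero]⟩
    · refine ⟨x, ?_⟩
      rcases zmod2_cases (φ x) with h0 | h1
      · exact absurd h0 hx
      · rw [hc, h1]
  rw [AddSubgroup.index_ker, AddMonoidHom.range_eq_top_of_surjective φ hsurj]
  rw [Nat.card_congr AddSubgroup.topEquiv.toEquiv, Nat.card_zmod]

noncomputable def homSubgroupEquiv :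
    {φ : G →+ ZMod 2 // φ ≠ 0} ≃ {H : AddSubgroup G // H.index = 2} where
  toFun φ := ⟨φ.1.ker, ker_index φ.2⟩
  invFun H := ⟨toHom H.1 H.2, toHom_ne H.2⟩
  left_inv φ := by
    refine Subtype.ext (AddMonoidHom.ext fun x => ?_)
    by_cases hx : φ.1 x = 0
    · rw [toHom_apply_of_mem _ (AddMonoidHom.mem_ker.2 hx), hx]
    · rw [toHom_apply_of_not_mem _ (fun h => hx (AddMonoidHom.mem_ker.1 h))]
      rcases zmod2_cases (φ.1 x) with h0 | h1
      · exact absurd h0 hx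
      · rw [h1]
  right_inv H := Subtype.ext (toHom_ker H.2)

lemma homSubgroupEquiv_fst (φ : {φ : G →+ ZMod 2 // φ ≠ 0}) :
    (homSubgroupEquiv φ).1 = φ.1.ker := rfl

end Esec

section Main3
variable {r1 r2 : ℕ} {α : Fin r1 → ℕ}

noncomputable def mkHom (hα : ∀ i, 2 ≤ α i) (a : Fin r1 → ZMod 2) (b : Fin r2 → ZMod 2) :
    ((∀ i : Fin r1, ZMod (2 ^ α i)) × (Fin r2 → ZMod 2)) →+ ZMod 2 :=
  (∑ i : Fin r1, (AddMonoidHom.mulLeft (a i)).comp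
      (((ZMod.castHom (dvd_pow_self 2 (show α i ≠ 0 by have := hα i; omega))
          (ZMod 2)).toAddMonoidHom).comp
        (Pi.evalAddMonoidHom (fun i => ZMod (2 ^ α i)) i))).comp
    (AddMonoidHom.fst _ _)
  + (∑ j : Fin r2, (AddMonoidHom.mulLeft (b j)).comp
      (Pi.evalAddMonoidHom (fun _ : Fin r2 => ZMod 2) j)).comp (AddMonoidHom.snd _ _)

lemma mkHom_apply (hα : ∀ i, 2 ≤ α i) (a : Fin r1 → ZMod 2) (b : Fin r2 → ZMod 2)
    (x : ∀ i : Fin r1, ZMod (2 ^ α i)) (y : Fin r2 → ZMod 2) :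
    mkHom hα a b (x, y) = ∑ i, a i * (((x i).val : ℕ) : ZMod 2) + ∑ j, b j * y j := by
  simp only [mkHom, AddMonoidHom.add_apply, AddMonoidHom.coe_comp, Function.comp_apply,
    AddMonoidHom.coe_fst, AddMonoidHom.coe_snd, AddMonoidHom.finset_sum_apply,
    Pi.evalAddMonoidHom_apply, RingHom.toAddMonoidHom_eq_coe, AddMonoidHom.coe_coe,
    ZMod.castHom_apply, AddMonoidHom.coe_mulLeft]
  congr 1
  refine Finset.sum_congr rfl fun i _ => ?_
  rw [ZMod.natCast_val]

noncomputable def psiEquiv (hα : ∀ i, 2 ≤ α i) :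
    (((∀ i : Fin r1, ZMod (2 ^ α i)) × (Fin r2 → ZMod 2)) →+ ZMod 2)
      ≃ (Fin r1 → ZMod 2) × (Fin r2 → ZMod 2) where
  toFun φ := (fun i => φ (Pi.single i 1, 0), fun j => φ (0, Pi.single j 1))
  invFun p := mkHom hα p.1 p.2
  left_inv φ := by
    refine AddMonoidHom.ext fun z => ?_
    obtain ⟨x, y⟩ := z
    rw [mkHom_apply, phi_decomp]
    congr 1
    · exact Finset.sum_congr rfl fun i _ => by rw [nsmul_eq_mul, mul_comm]
    · refine Finset.sum_congr rfl fun j _ => ?_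
      rw [nsmul_eq_mul, mul_comm, ZMod.natCast_val, ZMod.cast_id]
  right_inv p := by
    obtain ⟨a, b⟩ := p
    refine Prod.ext (funext fun i => ?_) (funext fun j => ?_)
    · show mkHom hα a b (Pi.single i 1, 0) = a i
      rw [mkHom_apply]
      have h2 : ∑ j, b j * (0 : Fin r2 → ZMod 2) j = 0 :=
        Finset.sum_eq_zero fun j _ => by rw [Pi.zero_apply, mul_zero]
      rw [h2, add_zero]
      rw [Finset.sum_eq_single i]
      · have hlt : 1 < 2 ^ α i := Nat.one_lt_pow (show α i ≠ 0 by have := hα i; omega) (by norm_num)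
        haveI := Fact.mk hlt
        rw [Pi.single_eq_same, ZMod.val_one, Nat.cast_one, mul_one]
      · intro i' _ hne
        rw [Pi.single_eq_of_ne hne, ZMod.val_zero, Nat.cast_zero, mul_zero]
      · intro h; exact absurd (Finset.mem_univ i) h
    · show mkHom hα a b (0, Pi.single j 1) = b j
      rw [mkHom_apply]
      have h1 : ∑ i, a i * ((((0 : ∀ i : Fin r1, ZMod (2 ^ α i)) i).val : ℕ) : ZMod 2) = 0 :=
        Finset.sum_eq_zero fun i _ => by
          rw [Pi.zero_apply, ZMod.val_zero, Nat.cast_zero, mul_zero]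
      rw [h1, zero_add]
      rw [Finset.sum_eq_single j]
      · rw [Pi.single_eq_same, mul_one]
      · intro j' _ hne
        rw [Pi.single_eq_of_ne hne, mul_zero]
      · intro h; exact absurd (Finset.mem_univ j) h

lemma C_iff (hα : ∀ i, 2 ≤ α i)
    (φ : ((∀ i : Fin r1, ZMod (2 ^ α i)) × (Fin r2 → ZMod 2)) →+ ZMod 2) :
    (∀ x, x + x = 0 → φ x = 0) ↔ ((psiEquiv hα φ).2 = 0) := by
  constructor
  · intro h
    funext j
    show φ (0, Pi.single j 1) = 0
    apply h
    have hs : (Pi.single j (1 : ZMod 2) : Fin r2 → ZMod 2) + Pi.single j 1 = 0 := by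
      funext j'
      exact zmod2_add_self _
    show ((0, Pi.single j 1) : _) + (0, Pi.single j 1) = 0
    rw [Prod.mk_add_mk, add_zero, hs]
    rfl
  · intro hb z hz
    have hbj : ∀ j, φ (0, Pi.single j 1) = 0 := fun j => congrFun hb j
    obtain ⟨x1, x2⟩ := z
    rw [phi_decomp]
    have h1 : x1 + x1 = 0 := congrArg Prod.fst hz
    have h2 : ∀ i, 2 ∣ (x1 i).val := by
      intro i
      have hd := torsion_val_dvd (show 1 ≤ α i by have := hα i; omega) (x1 i) (congrFun h1 i)
      exact dvd_trans (dvd_pow_self 2 (show α i - 1 ≠ 0 by have := hα i; omega)) hd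
    rw [Finset.sum_eq_zero (fun i _ => even_smul_zmod2 _ (h2 i) _),
      Finset.sum_eq_zero (fun j _ => by rw [hbj j, smul_zero]), add_zero]

end Main3

section Main4
variable {r1 r2 : ℕ} {α : Fin r1 → ℕ}

lemma psi_zero (hα : ∀ i, 2 ≤ α i) : psiEquiv (r2 := r2) hα 0 = 0 := by
  refine Prod.ext (funext fun i => ?_) (funext fun j => ?_) <;> rfl

lemma psi_ne (hα : ∀ i, 2 ≤ α i)
    (φ : ((∀ i : Fin r1, ZMod (2 ^ α i)) × (Fin r2 → ZMod 2)) →+ ZMod 2) :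
    φ ≠ 0 ↔ psiEquiv hα φ ≠ 0 := by
  constructor
  · intro h h0
    exact h ((psiEquiv hα).injective (h0.trans (psi_zero hα).symm))
  · intro h h0
    exact h (by rw [h0, psi_zero])

lemma count1 (hα : ∀ i, 2 ≤ α i) :
    Nat.card {φ : ((∀ i : Fin r1, ZMod (2 ^ α i)) × (Fin r2 → ZMod 2)) →+ ZMod 2 //
      φ ≠ 0 ∧ ∀ x, x + x = 0 → φ x = 0} = 2 ^ r1 - 1 := by
  classical
  have e1 := Equiv.subtypeEquiv (psiEquiv (r2 := r2) hα)
    (q := fun p => p ≠ 0 ∧ p.2 = 0)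
    (fun φ => and_congr (psi_ne hα φ) (C_iff hα φ))
  have e2 : {p : (Fin r1 → ZMod 2) × (Fin r2 → ZMod 2) // p ≠ 0 ∧ p.2 = 0}
      ≃ {a : Fin r1 → ZMod 2 // a ≠ 0} :=
    { toFun := fun p => ⟨p.1.1, fun h => p.2.1 (Prod.ext h p.2.2)⟩
      invFun := fun a => ⟨(a.1, 0), fun h => a.2 (congrArg Prod.fst h), rfl⟩
      left_inv := fun p => Subtype.ext (Prod.ext rfl p.2.2.symm)
      right_inv := fun a => rfl }
  rw [Nat.card_congr (e1.trans e2), card_ne, Nat.card_fun, Nat.card_zmod,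
    Nat.card_eq_fintype_card, Fintype.card_fin]

lemma count2 (hα : ∀ i, 2 ≤ α i) :
    Nat.card {φ : ((∀ i : Fin r1, ZMod (2 ^ α i)) × (Fin r2 → ZMod 2)) →+ ZMod 2 //
      φ ≠ 0 ∧ ¬ ∀ x, x + x = 0 → φ x = 0} = 2 ^ (r1 + r2) - 2 ^ r1 := by
  classical
  have e1 := Equiv.subtypeEquiv (psiEquiv (r2 := r2) hα)
    (q := fun p => p ≠ 0 ∧ p.2 ≠ 0)
    (fun φ => and_congr (psi_ne hα φ) (not_congr (C_iff hα φ)))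
  have e2 : {p : (Fin r1 → ZMod 2) × (Fin r2 → ZMod 2) // p ≠ 0 ∧ p.2 ≠ 0}
      ≃ {p : (Fin r1 → ZMod 2) × (Fin r2 → ZMod 2) // p.2 ≠ 0} :=
    Equiv.subtypeEquivRight (fun p =>
      ⟨fun h => h.2, fun h => ⟨fun h0 => h (by rw [h0]; rfl), h⟩⟩)
  have e3 : {p : (Fin r1 → ZMod 2) × (Fin r2 → ZMod 2) // p.2 ≠ 0}
      ≃ (Fin r1 → ZMod 2) × {b : Fin r2 → ZMod 2 // b ≠ 0} :=
    { toFun := fun p => (p.1.1, ⟨p.1.2, p.2⟩)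
      invFun := fun q => ⟨(q.1, q.2.1), q.2.2⟩
      left_inv := fun p => rfl
      right_inv := fun q => rfl }
  rw [Nat.card_congr ((e1.trans e2).trans e3), Nat.card_prod, card_ne, Nat.card_fun,
    Nat.card_fun, Nat.card_zmod, Nat.card_eq_fintype_card (α := Fin r1), Fintype.card_fin,
    Nat.card_eq_fintype_card (α := Fin r2), Fintype.card_fin, Nat.mul_sub, mul_one, pow_add]

end Main4

/-- For `G = Z_{2^{α1}} ⊕ ... ⊕ Z_{2^{α_{r1}}} ⊕ Z_2^{r2}` with
`α1 ≥ ... ≥ α_{r1} ≥ 2` and `r := r1 + r2 ≥ 1`, there are exactly `2^{r1} - 1`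
index-2 subgroups of rank `r`, and exactly `2^r - 2^{r1}` index-2 subgroups of
rank `r - 1`. -/
theorem stmt4 (r1 r2 : ℕ) (hr : 1 ≤ r1 + r2) (α : Fin r1 → ℕ)
    (hmono : Antitone α) (hα : ∀ i, 2 ≤ α i) :
    Nat.card {H : AddSubgroup ((∀ i : Fin r1, ZMod (2 ^ α i)) × (Fin r2 → ZMod 2)) //
        H.index = 2 ∧ HasRank2Group H (r1 + r2)} = 2 ^ r1 - 1 ∧
    Nat.card {H : AddSubgroup ((∀ i : Fin r1, ZMod (2 ^ α i)) × (Fin r2 → ZMod 2)) //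
        H.index = 2 ∧ HasRank2Group H (r1 + r2 - 1)} = 2 ^ (r1 + r2) - 2 ^ r1 := by
  classical
  have hα1 : ∀ i, 1 ≤ α i := fun i => le_trans (by norm_num) (hα i)
  have base : ∀ P : AddSubgroup ((∀ i : Fin r1, ZMod (2 ^ α i)) × (Fin r2 → ZMod 2)) → Prop,
      {H : AddSubgroup ((∀ i : Fin r1, ZMod (2 ^ α i)) × (Fin r2 → ZMod 2)) //
        H.index = 2 ∧ P H}
      ≃ {φ : ((∀ i : Fin r1, ZMod (2 ^ α i)) × (Fin r2 → ZMod 2)) →+ ZMod 2 //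
        φ ≠ 0 ∧ P φ.ker} := fun P =>
    ((Equiv.subtypeSubtypeEquivSubtypeInter _ _).symm.trans
      ((homSubgroupEquiv.subtypeEquiv
        (p := fun φ' => P φ'.1.ker) (q := fun H' => P H'.1)
        (fun φ' => Iff.rfl)).symm)).trans
      (Equiv.subtypeSubtypeEquivSubtypeInter _ _)
  constructor
  · rw [Nat.card_congr ((base (fun H => HasRank2Group H (r1 + r2))).trans
      (Equiv.subtypeEquivRight (fun φ =>
        and_congr_right fun _ => (hasrank_ker hα1 hr φ).1)))]
    exact count1 hα
  · rw [Nat.card_congr ((base (fun H => HasRank2Group H (r1 + r2 - 1))).trans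
      (Equiv.subtypeEquivRight (fun φ =>
        and_congr_right fun _ => (hasrank_ker hα1 hr φ).2)))]
    exact count2 hα
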